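/- arXiv:0804.2166 — 2 statements merged into one kernel-verified Lean document; each statement's English description precedes it below -/
import Mathlib

section
/- Any finite subgroup F of GL(n, ℤ) injects under reduction modulo 3 into GL(n, ℤ/3ℤ); in particular |F| ≤ |GL(n, ℤ/3ℤ)|. -/
private theorem mink_pow_dvd {n m : ℕ} (B : Matrix (Fin n) (Fin n) ℤ) (d : ℤ)
    (h : ∀ i j, d ∣ B i j) (hm : 1 ≤ m) : ∀ i j, d ^ m ∣ (B ^ m) i j := by
  induction m with
  | zero => omega
  | succ m ih =>
    rcases Nat.eq_or_lt_of_le hm with h1 | h1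
    · obtain rfl : m = 0 := by omega
      intro i j; simpa using h i j
    · intro i j
      rw [pow_succ, pow_succ, Matrix.mul_apply]
      exact Finset.dvd_sum fun l _ => mul_dvd_mul (ih (by omega) i l) (h l j)

private theorem mink_binom {n : ℕ} (p : ℕ) (B : Matrix (Fin n) (Fin n) ℤ)
    (hpow : (1 + B) ^ p = 1) :
    ∑ j ∈ Finset.range (p + 1), (p.choose j : ℤ) • B ^ j = 1 := by
  rw [← hpow, add_comm (1 : Matrix (Fin n) (Fin n) ℤ) B,
    Commute.add_pow (Commute.one_right B)]
  refine Finset.sum_congr rfl fun j hj => ?_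
  rw [one_pow, mul_one, zsmul_eq_mul]
  exact (Nat.cast_commute (p.choose j) (B ^ j)).eq

private theorem mink_step {n : ℕ} (p : ℕ) (hp : p.Prime) (B : Matrix (Fin n) (Fin n) ℤ)
    (hpow : (1 + B) ^ p = 1) (k : ℕ) (hk : 1 ≤ k) (h : ∀ i j, (3:ℤ) ^ k ∣ B i j) :
    ∀ i j, (3:ℤ) ^ (k + 1) ∣ B i j := by
  have hbin := mink_binom p B hpow
  have hp2 : 2 ≤ p := hp.two_le
  have hsplit : Finset.range (p + 1) =
      insert 0 (insert 1 (Finset.Ico 2 (p + 1))) := by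
    ext x; simp; omega
  rw [hsplit, Finset.sum_insert (by simp), Finset.sum_insert (by simp)] at hbin
  simp only [pow_zero, pow_one, Nat.choose_zero_right, Nat.choose_one_right,
    Nat.cast_one, one_smul] at hbin
  -- hbin : 1 + (p:ℤ) • B + S = 1
  have key : (p : ℤ) • B = -∑ j ∈ Finset.Ico 2 (p + 1), (p.choose j : ℤ) • B ^ j := by
    linear_combination (norm := abel) hbin
  intro i j
  have hentry : (p : ℤ) * B i j =
      -∑ l ∈ Finset.Ico 2 (p + 1), (p.choose l : ℤ) * (B ^ l) i j := by
    have := congrFun (congrFun key i) j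
    simp only [Matrix.smul_apply, Matrix.neg_apply, Matrix.sum_apply, smul_eq_mul] at this
    exact this
  rcases eq_or_ne p 3 with rfl | hp3
  · -- p = 3 : show 3^(k+2) divides each term
    have hdvd : (3:ℤ) ^ (k + 2) ∣ (3 : ℤ) * B i j := by
      rw [show ((3:ℕ):ℤ) = (3:ℤ) by norm_num] at hentry
      rw [hentry]
      refine dvd_neg.mpr (Finset.dvd_sum fun l hl => ?_)
      simp only [Finset.mem_Ico] at hl
      obtain ⟨hl1, hl2⟩ := hl
      have hBl : (3:ℤ) ^ (k * l) ∣ (B ^ l) i j := by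
        have := mink_pow_dvd (m := l) B ((3:ℤ)^k) h (by omega) i j
        rwa [← pow_mul] at this
      interval_cases l
      · -- l = 2, choose 3 2 = 3
        have : (3:ℤ) ^ (k + 2) ∣ (3:ℤ) * (B ^ 2) i j := by
          have h1 : (3:ℤ) ^ (k + 2) ∣ (3:ℤ) * (3:ℤ) ^ (k * 2) := by
            rw [← pow_succ']
            exact pow_dvd_pow 3 (by omega)
          exact h1.trans (mul_dvd_mul_left 3 hBl)
        simpa [Nat.choose] using this
      · -- l = 3, choose 3 3 = 1
        have h1 : (3:ℤ) ^ (k + 2) ∣ (3:ℤ) ^ (k * 3) := pow_dvd_pow 3 (by omega)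
        simpa [Nat.choose] using (h1.trans hBl)
    rw [pow_succ'] at hdvd
    exact (mul_dvd_mul_iff_left (by norm_num : (3:ℤ) ≠ 0)).mp hdvd
  · -- p ≠ 3 : 3^(k+1) divides p * B i j, and 3^(k+1) coprime to p
    have hdvd : (3:ℤ) ^ (k + 1) ∣ (p : ℤ) * B i j := by
      rw [hentry]
      refine dvd_neg.mpr (Finset.dvd_sum fun l hl => ?_)
      simp only [Finset.mem_Ico] at hl
      obtain ⟨hl1, hl2⟩ := hl
      have hBl : (3:ℤ) ^ (k * l) ∣ (B ^ l) i j := by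
        have := mink_pow_dvd (m := l) B ((3:ℤ)^k) h (by omega) i j
        rwa [← pow_mul] at this
      exact Dvd.dvd.mul_left ((pow_dvd_pow 3 (by nlinarith)).trans hBl) _
    have hcop : IsCoprime ((3:ℤ) ^ (k + 1)) (p : ℤ) := by
      refine IsCoprime.pow_left ?_
      rw [Int.isCoprime_iff_gcd_eq_one]
      have : Nat.Coprime 3 p := (Nat.coprime_primes (by norm_num) hp).mpr (by omega)
      simpa [Int.gcd] using this
    exact hcop.dvd_of_dvd_mul_left hdvd

private theorem mink_matrix {n : ℕ} (p : ℕ) (hp : p.Prime) (B : Matrix (Fin n) (Fin n) ℤ)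
    (h3 : ∀ i j, (3:ℤ) ∣ B i j) (hpow : (1 + B) ^ p = 1) : B = 0 := by
  have hall : ∀ k, 1 ≤ k → ∀ i j, (3:ℤ) ^ k ∣ B i j := by
    intro k hk
    induction k with
    | zero => omega
    | succ k ih =>
      rcases Nat.eq_or_lt_of_le hk with h1 | h1
      · obtain rfl : k = 0 := by omega
        intro i j; simpa using h3 i j
      · exact mink_step p hp B hpow k (by omega) (ih (by omega))
  ext i j
  simp only [Matrix.zero_apply]
  by_contra hne
  have h1 : (3:ℤ) ^ (B i j).natAbs ∣ B i j := hall _ (Nat.one_le_iff_ne_zero.mpr (Int.natAbs_ne_zero.mpr hne)) i j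
  have h2 : (3:ℤ) ^ (B i j).natAbs ≤ |B i j| :=
    Int.le_of_dvd (abs_pos.mpr hne) ((dvd_abs _ _).mpr h1)
  have h3' : ((B i j).natAbs : ℤ) < 3 ^ (B i j).natAbs := by
    exact_mod_cast Nat.lt_pow_self (n := (B i j).natAbs) (by norm_num : 1 < 3)
  rw [Int.abs_eq_natAbs] at h2
  omega

private theorem mink_ker_prime {n : ℕ} (p : ℕ) (hp : p.Prime) (g : GL (Fin n) ℤ)
    (hfg : Units.map ((Int.castRingHom (ZMod 3)).mapMatrix.toMonoidHom) g = 1)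
    (hgp : g ^ p = 1) : g = 1 := by
  set φ : Matrix (Fin n) (Fin n) ℤ →+* Matrix (Fin n) (Fin n) (ZMod 3) := (Int.castRingHom (ZMod 3)).mapMatrix with hφ
  set B : Matrix (Fin n) (Fin n) ℤ := (g : Matrix (Fin n) (Fin n) ℤ) - 1 with hB
  have hval : φ (g : Matrix (Fin n) (Fin n) ℤ) = 1 := congrArg Units.val hfg
  have hmap : φ B = 0 := by rw [hB, map_sub, hval, map_one, sub_self]
  have h3 : ∀ i j, (3:ℤ) ∣ B i j := by
    intro i j
    have := congrFun (congrFun hmap i) j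
    rw [hφ, RingHom.mapMatrix_apply, Matrix.map_apply] at this
    exact (ZMod.intCast_zmod_eq_zero_iff_dvd _ 3).mp (by exact_mod_cast this)
  have hpow : (1 + B) ^ p = 1 := by
    rw [hB, add_sub_cancel]
    calc (g : Matrix (Fin n) (Fin n) ℤ) ^ p = ((g ^ p : GL (Fin n) ℤ) : Matrix (Fin n) (Fin n) ℤ) := by
          rw [Units.val_pow_eq_pow_val]
      _ = 1 := by rw [hgp]; rfl
  have hB0 : B = 0 := mink_matrix p hp B h3 hpow
  ext i j
  have : (g : Matrix (Fin n) (Fin n) ℤ) = 1 := by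
    have := sub_eq_zero.mp (hB ▸ hB0)
    exact this
  exact_mod_cast congrFun (congrFun this i) j

private theorem mink_ker {n : ℕ} (g : GL (Fin n) ℤ)
    (hfg : Units.map ((Int.castRingHom (ZMod 3)).mapMatrix.toMonoidHom) g = 1)
    (hfin : IsOfFinOrder g) : g = 1 := by
  by_contra hne
  set m := orderOf g with hm
  have hm0 : 0 < m := hfin.orderOf_pos
  have hm1 : m ≠ 1 := fun h => hne (orderOf_eq_one_iff.mp h)
  have hp : (m.minFac).Prime := Nat.minFac_prime hm1
  set v := g ^ (m / m.minFac) with hv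
  have hvp : v ^ m.minFac = 1 := by
    rw [hv, ← pow_mul, Nat.div_mul_cancel m.minFac_dvd, hm, pow_orderOf_eq_one]
  have hfv : Units.map ((Int.castRingHom (ZMod 3)).mapMatrix.toMonoidHom) v = 1 := by
    rw [hv, map_pow, hfg, one_pow]
  have hv1 : v = 1 := mink_ker_prime m.minFac hp v hfv hvp
  have hdvd : m ∣ m / m.minFac := orderOf_dvd_of_pow_eq_one hv1
  have hlt : m / m.minFac < m := Nat.div_lt_self hm0 hp.one_lt
  have hpos : 0 < m / m.minFac := Nat.div_pos (Nat.minFac_le hm0) hp.pos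
  have := Nat.le_of_dvd hpos hdvd
  omega

set_option maxHeartbeats 1000000 in
/-- Minkowski's theorem: any finite subgroup `F` of `GL(n, ℤ)` injects under reduction
modulo `3` into `GL(n, ℤ/3ℤ)`; in particular `|F| ≤ |GL(n, ℤ/3ℤ)|`. -/
theorem finite_subgroup_GL_int_injects_mod_three (n : ℕ)
    (F : Subgroup (GL (Fin n) ℤ)) (hF : Finite F) :
    Set.InjOn (Units.map ((Int.castRingHom (ZMod 3)).mapMatrix.toMonoidHom))
        (F : Set (GL (Fin n) ℤ)) ∧
      Nat.card F ≤ Nat.card (GL (Fin n) (ZMod 3)) := by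
  have hinj : Set.InjOn (Units.map ((Int.castRingHom (ZMod 3)).mapMatrix.toMonoidHom))
      (F : Set (GL (Fin n) ℤ)) := by
    intro g hg h hh heq
    have hd : g * h⁻¹ ∈ F := F.mul_mem hg (F.inv_mem hh)
    have hfin : IsOfFinOrder (g * h⁻¹) := by
      have := isOfFinOrder_of_finite (⟨g * h⁻¹, hd⟩ : F)
      exact F.subtype.isOfFinOrder this
    have h1 : Units.map ((Int.castRingHom (ZMod 3)).mapMatrix.toMonoidHom) (g * h⁻¹) = 1 := by
      rw [map_mul, map_inv, heq, mul_inv_cancel]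
    have := mink_ker (g * h⁻¹) h1 hfin
    exact mul_inv_eq_one.mp this
  refine ⟨hinj, ?_⟩
  have : Nat.card (F : Set (GL (Fin n) ℤ)) ≤ Nat.card (GL (Fin n) (ZMod 3)) :=
    Nat.card_le_card_of_injective _ (Set.injOn_iff_injective.mp hinj)
  simpa using this
end

section
/- For k = ℚ and 0 < δ < 1, x ≥ 2, one has β_ℚ(x; δ) ≤ ((12x/δ) log(2x/δ))^{1/δ}, using the lower bound π(x) ≥ x/(6 log x) for x ≥ 2. -/
set_option maxHeartbeats 1000000
noncomputable section

/-- Chebyshev-type bound: `4^k ≤ (2k)^(π(2k)+1)`. -/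
private lemma cheb_nat (k : ℕ) (hk : 1 ≤ k) :
    4 ^ k ≤ (2 * k) ^ ((((Finset.range (2 * k + 1)).filter Nat.Prime).card) + 1) := by
  have hC : Nat.centralBinom k ≠ 0 := (Nat.centralBinom_pos k).ne'
  have h1 : 4 ^ k ≤ 2 * k * Nat.centralBinom k :=
    Nat.four_pow_le_two_mul_self_mul_centralBinom k hk
  have h2 : Nat.centralBinom k ≤
      (2 * k) ^ (((Finset.range (2 * k + 1)).filter Nat.Prime).card) := by
    have hfact := Nat.factorization_prod_pow_eq_self hC
    rw [Finsupp.prod] at hfact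
    have hfle : ∀ p ∈ (Nat.centralBinom k).factorization.support,
        p ^ (Nat.centralBinom k).factorization p ≤ 2 * k := by
      intro p _
      have := Nat.pow_factorization_choose_le (p := p) (n := 2 * k) (k := k)
        (by omega)
      simpa [Nat.centralBinom] using this
    calc Nat.centralBinom k
        = ∏ p ∈ (Nat.centralBinom k).factorization.support,
            p ^ (Nat.centralBinom k).factorization p := hfact.symm
      _ ≤ (2 * k) ^ ((Nat.centralBinom k).factorization.support.card) :=
          Finset.prod_le_pow_card _ _ _ hfle
      _ ≤ (2 * k) ^ (((Finset.range (2 * k + 1)).filter Nat.Prime).card) := by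
          apply Nat.pow_le_pow_right (by omega)
          apply Finset.card_le_card
          intro p hp
          rw [Nat.support_factorization] at hp
          have hp' : p.Prime := Nat.prime_of_mem_primeFactors hp
          have hν : (Nat.centralBinom k).factorization p ≠ 0 := by
            rw [← Nat.support_factorization] at hp
            exact Finsupp.mem_support_iff.mp hp
          have hple : p ≤ 2 * k := by
            have hpow := Nat.pow_factorization_choose_le (p := p) (n := 2 * k) (k := k)
              (by omega)
            rw [show (2 * k).choose k = Nat.centralBinom k from rfl] at hpow
            calc p ≤ p ^ (Nat.centralBinom k).factorization p :=
                  Nat.le_self_pow hν p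
              _ ≤ 2 * k := hpow
          exact Finset.mem_filter.mpr ⟨Finset.mem_range.mpr (by omega), hp'⟩
  calc 4 ^ k ≤ 2 * k * Nat.centralBinom k := h1
    _ ≤ 2 * k * (2 * k) ^ (((Finset.range (2 * k + 1)).filter Nat.Prime).card) :=
        Nat.mul_le_mul_left _ h2
    _ = (2 * k) ^ ((((Finset.range (2 * k + 1)).filter Nat.Prime).card) + 1) := by
        rw [pow_succ]; ring


private lemma key_ineq (x δ A L Q lA l2 T c' : ℝ)
    (hδ0 : 0 < δ) (hδ1 : δ < 1) (hl2 : 0.6931471803 < l2)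
    (hL2 : 2 * l2 ≤ L) (hL0 : 0 < L)
    (hA24 : 24 * L ≤ A) (hA0 : 0 < A)
    (hlA3L : lA ≤ 3 * L) (hQδ : Q * δ = lA) (hQ0 : 0 < Q)
    (hAδT : A ≤ δ * T) (hT0 : 0 < T) (hδT : δ * T ≤ T)
    (hxA : x * (12 * L) = A * δ)
    (hcheb : (T - 2) * l2 ≤ (c' + 1) * Q) :
    x * T ≤ c' * A := by
  have hmain : T + 4 * Q + 8 * l2 ≤ 4 * T * l2 := by
    have h4Q : 4 * Q ≤ T / 2 := by nlinarith
    have hT24L : 24 * L ≤ T := by linarith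
    nlinarith
  have hstep : T * lA ≤ 12 * L * ((T - 2) * l2 - Q) := by nlinarith
  have hmul : x * T * (12 * L * Q) ≤ c' * A * (12 * L * Q) := by
    have e1 : x * T * (12 * L * Q) = A * T * (Q * δ) := by
      have e0 : x * T * (12 * L * Q) = (x * (12 * L)) * T * Q := by ring
      rw [e0, hxA]; ring
    rw [e1, hQδ]
    have h5 : (T - 2) * l2 - Q ≤ c' * Q := by linarith
    have e2 : A * (12 * L * ((T - 2) * l2 - Q)) ≤ c' * A * (12 * L * Q) := by
      calc A * (12 * L * ((T - 2) * l2 - Q)) = (12 * L * A) * ((T - 2) * l2 - Q) := by ring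
        _ ≤ (12 * L * A) * (c' * Q) := by
            apply mul_le_mul_of_nonneg_left h5
            nlinarith
        _ = c' * A * (12 * L * Q) := by ring
    calc A * T * lA = A * (T * lA) := by ring
      _ ≤ A * (12 * L * ((T - 2) * l2 - Q)) := mul_le_mul_of_nonneg_left hstep hA0.le
      _ ≤ c' * A * (12 * L * Q) := e2
  have hpos : 0 < 12 * L * Q := mul_pos (mul_pos (by norm_num) hL0) hQ0
  exact le_of_mul_le_mul_right hmul hpos

/-- `β_ℚ(x; δ) = min{t ≥ 2 : Σ_{p ≤ t} p^{−1+δ} ≥ x}`, the sum running over the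
rational primes `p ≤ t`. -/
def betaQ (x δ : ℝ) : ℝ :=
  sInf {t : ℝ | 2 ≤ t ∧
    x ≤ ∑ᶠ p : ℕ, if p.Prime ∧ (p : ℝ) ≤ t then (p : ℝ) ^ (-1 + δ) else 0}

/-- For `k = ℚ`, `0 < δ < 1` and `x ≥ 2` one has
`β_ℚ(x; δ) ≤ ((12x/δ) log(2x/δ))^{1/δ}` (proved using `π(x) ≥ x/(6 log x)`). -/
theorem betaQ_le (x δ : ℝ) (hx : 2 ≤ x) (hδ0 : 0 < δ) (hδ1 : δ < 1) :
    betaQ x δ ≤ ((12 * x / δ) * Real.log (2 * x / δ)) ^ (1 / δ) := by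
  set y : ℝ := 2 * x / δ with hy_def
  set L : ℝ := Real.log y with hL_def
  set A : ℝ := (12 * x / δ) * Real.log (2 * x / δ) with hA_def
  set T : ℝ := A ^ (1 / δ) with hT_def
  set l2 : ℝ := Real.log 2 with hl2_def
  have hl2 : 0.6931471803 < l2 := Real.log_two_gt_d9
  -- basic facts
  have hy4 : 4 ≤ y := by
    rw [hy_def, le_div_iff₀ hδ0]; nlinarith
  have hL2 : 2 * l2 ≤ L := by
    have h4 : Real.log 4 ≤ L := Real.log_le_log (by norm_num) hy4
    rw [show (4 : ℝ) = 2 ^ (2 : ℕ) by norm_num, Real.log_pow] at h4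
    push_cast at h4; linarith
  have hL0 : 0 < L := by linarith
  have hAy : A = 6 * y * L := by
    rw [hA_def, hy_def, hL_def]; ring
  have hA24 : 24 * L ≤ A := by rw [hAy]; nlinarith
  have hA0 : 0 < A := by linarith
  have hA1 : 1 ≤ A := by nlinarith
  have hlA1 : 1 ≤ Real.log A := by
    rw [Real.le_log_iff_exp_le hA0]
    have := Real.exp_one_lt_d9
    nlinarith
  have hlA0 : 0 < Real.log A := by linarith
  -- T ≥ A
  have hδinv : 1 ≤ 1 / δ := by
    rw [le_div_iff₀ hδ0]; linarith
  have hTA : A ≤ T := by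
    calc A = A ^ (1 : ℝ) := (Real.rpow_one A).symm
      _ ≤ A ^ (1 / δ) := Real.rpow_le_rpow_of_exponent_le hA1 hδinv
  have hT33 : 33 ≤ T := by nlinarith
  have hT0 : 0 < T := by linarith
  -- log T
  have hQ_def : Real.log T = (1 / δ) * Real.log A := Real.log_rpow hA0 _
  set Q : ℝ := Real.log T with hQQ
  have hQδ : Q * δ = Real.log A := by
    rw [hQ_def]; field_simp
  have hQ0 : 0 < Q := by nlinarith
  -- T^δ = A and T^(-1+δ) = A/T
  have hTδ : T ^ δ = A := by
    rw [hT_def, ← Real.rpow_mul hA0.le, one_div, inv_mul_cancel₀ hδ0.ne', Real.rpow_one]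
  have hTm : T ^ (-1 + δ) = A / T := by
    rw [Real.rpow_add hT0, hTδ, Real.rpow_neg_one]; ring
  -- log A ≤ 3 L
  have hlA3L : Real.log A ≤ 3 * L := by
    set s : ℝ := Real.sqrt y with hs_def
    have hss : s * s = y := Real.mul_self_sqrt (by linarith)
    have hs2 : 2 ≤ s := by
      have : (2 : ℝ) ≤ Real.sqrt y := by
        rw [show (2:ℝ) = Real.sqrt 4 by rw [show (4:ℝ) = 2^2 by norm_num, Real.sqrt_sq]; norm_num]
        exact Real.sqrt_le_sqrt hy4
      exact this
    have hs0 : 0 < s := by linarith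
    have hlogs : Real.log s ≤ s - 1 := Real.log_le_sub_one_of_pos hs0
    have hLss : L = Real.log s + Real.log s := by
      rw [hL_def, ← hss, Real.log_mul hs0.ne' hs0.ne']
    have hAy3 : A ≤ y ^ (3 : ℕ) := by
      rw [hAy, ← hss]
      nlinarith [sq_nonneg (s * s - 4), sq_nonneg (s - 2), hs2, hlogs, hLss]
    have := Real.log_le_log hA0 hAy3
    rw [Real.log_pow] at this
    push_cast at this
    rw [← hL_def] at this
    linarith
  -- A ≤ δ T
  have hAδT : A ≤ δ * T := by
    have h1 : T = A * A ^ (1 / δ - 1) := by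
      calc T = A ^ (1 + (1 / δ - 1)) := by rw [hT_def]; ring_nf
        _ = A ^ (1:ℝ) * A ^ (1 / δ - 1) := Real.rpow_add hA0 _ _
        _ = A * A ^ (1 / δ - 1) := by rw [Real.rpow_one]
    have h2 : 1 / δ ≤ A ^ (1 / δ - 1) := by
      rw [Real.rpow_def_of_pos hA0]
      have h3 : (1 / δ - 1) * 1 ≤ Real.log A * (1 / δ - 1) := by
        rw [mul_comm]
        exact mul_le_mul_of_nonneg_right hlA1 (by linarith)
      calc 1 / δ = (1 / δ - 1) * 1 + 1 := by ring
        _ ≤ Real.log A * (1 / δ - 1) + 1 := by linarith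
        _ ≤ Real.exp (Real.log A * (1 / δ - 1)) := Real.add_one_le_exp _
    have h4 : A * (1 / δ) ≤ T := by
      rw [h1]
      exact mul_le_mul_of_nonneg_left h2 hA0.le
    calc A = δ * (A * (1 / δ)) := by field_simp
      _ ≤ δ * T := mul_le_mul_of_nonneg_left h4 hδ0.le
  -- floors
  set n : ℕ := ⌊T⌋₊ with hn_def
  set k : ℕ := ⌊T / 2⌋₊ with hk_def
  have hnT : (n : ℝ) ≤ T := Nat.floor_le hT0.le
  have hkT2 : (k : ℝ) ≤ T / 2 := Nat.floor_le (by linarith)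
  have hk1 : 1 ≤ k := Nat.le_floor (by push_cast; linarith)
  have hkT : (T - 2) / 2 ≤ (k : ℝ) := by
    have := Nat.lt_floor_add_one (T / 2)
    linarith
  have h2kn : 2 * k ≤ n := Nat.le_floor (by push_cast; linarith)
  have hfloor : ∀ p : ℕ, (p : ℝ) ≤ T → p ≤ n := fun p hp => Nat.le_floor hp
  clear_value n k
  set F : Finset ℕ := (Finset.range (n + 1)).filter Nat.Prime with hF_def
  set F' : Finset ℕ := (Finset.range (2 * k + 1)).filter Nat.Prime with hF'_def
  have hFF' : F' ⊆ F := by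
    apply Finset.filter_subset_filter
    apply Finset.range_subset_range.mpr
    omega
  set c : ℕ := F.card with hc_def
  set c' : ℕ := F'.card with hc'_def
  have hcc' : c' ≤ c := Finset.card_le_card hFF'
  -- Chebyshev in ℝ
  have hcheb : (T - 2) * l2 ≤ ((c' : ℝ) + 1) * Q := by
    have hnat := cheb_nat k hk1
    have hcast : ((4 : ℝ)) ^ k ≤ ((2 * k : ℕ) : ℝ) ^ (c' + 1) := by
      exact_mod_cast Nat.cast_le.mpr hnat
    have hlog := Real.log_le_log (by positivity) hcast
    rw [Real.log_pow, Real.log_pow] at hlog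
    have h2k0 : (0 : ℝ) < ((2 * k : ℕ) : ℝ) := by
      push_cast; positivity
    have h2kT : ((2 * k : ℕ) : ℝ) ≤ T := by push_cast; linarith
    have hlog2k : Real.log ((2 * k : ℕ) : ℝ) ≤ Q := Real.log_le_log h2k0 h2kT
    have hlog4 : Real.log 4 = 2 * l2 := by
      rw [show (4 : ℝ) = 2 ^ (2 : ℕ) by norm_num, Real.log_pow]; push_cast; ring
    rw [hlog4] at hlog
    have hc'1 : (0 : ℝ) ≤ (c' : ℝ) + 1 := by positivity
    calc (T - 2) * l2 ≤ (k : ℝ) * (2 * l2) := by nlinarith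
      _ ≤ ((c' : ℝ) + 1) * Real.log ((2 * k : ℕ) : ℝ) := by push_cast at hlog ⊢; linarith
      _ ≤ ((c' : ℝ) + 1) * Q := by nlinarith
  -- the key inequality : x * T ≤ c' * A
  have hxA : x * (12 * L) = A * δ := by
    rw [hA_def, hL_def, hy_def]; field_simp
  have hkey : x * T ≤ (c' : ℝ) * A :=
    key_ineq x δ A L Q (Real.log A) l2 T (c' : ℝ) hδ0 hδ1 hl2 hL2 hL0 hA24 hA0
      hlA3L hQδ hQ0 hAδT hT0 (by nlinarith) hxA (by exact_mod_cast hcheb)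
  -- now the sum bound
  have hmem : T ∈ {t : ℝ | 2 ≤ t ∧
      x ≤ ∑ᶠ p : ℕ, if p.Prime ∧ (p : ℝ) ≤ t then (p : ℝ) ^ (-1 + δ) else 0} := by
    constructor
    · linarith
    · have hsupp : (Function.support fun p : ℕ =>
          if p.Prime ∧ (p : ℝ) ≤ T then (p : ℝ) ^ (-1 + δ) else 0) ⊆
          ↑(Finset.range (n + 1)) := by
        intro p hp
        simp only [Function.mem_support, ne_eq] at hp
        by_cases h : p.Prime ∧ (p : ℝ) ≤ T
        · simp only [Finset.coe_range, Set.mem_Iio, Nat.lt_succ_iff]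
          exact hfloor p h.2
        · simp [h] at hp
      rw [finsum_eq_sum_of_support_subset _ hsupp]
      have hsum_eq : ∑ p ∈ Finset.range (n + 1),
          (if p.Prime ∧ (p : ℝ) ≤ T then (p : ℝ) ^ (-1 + δ) else 0) =
          ∑ p ∈ F, (p : ℝ) ^ (-1 + δ) := by
        rw [hF_def, Finset.sum_filter]
        apply Finset.sum_congr rfl
        intro p hp
        have hpn : p ≤ n := Nat.lt_succ_iff.mp (Finset.mem_range.mp hp)
        have hpT : (p : ℝ) ≤ T := le_trans (by exact_mod_cast Nat.cast_le.mpr hpn) hnT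
        simp only [and_iff_left hpT]
      rw [hsum_eq]
      have hterm : ∀ p ∈ F, T ^ (-1 + δ) ≤ (p : ℝ) ^ (-1 + δ) := by
        intro p hp
        obtain ⟨hpr, hpprime⟩ := Finset.mem_filter.mp hp
        have hp0 : (0 : ℝ) < (p : ℝ) := by
          exact_mod_cast hpprime.pos
        have hpn : p ≤ n := Nat.lt_succ_iff.mp (Finset.mem_range.mp hpr)
        have hpT : (p : ℝ) ≤ T := le_trans (by exact_mod_cast Nat.cast_le.mpr hpn) hnT
        exact Real.rpow_le_rpow_of_nonpos hp0 hpT (by linarith)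
      calc x ≤ (c' : ℝ) * A / T := (le_div_iff₀ hT0).mpr hkey
        _ = (c' : ℝ) * (A / T) := by ring
        _ ≤ (c : ℝ) * (A / T) := by
            have : (0:ℝ) ≤ A / T := by positivity
            have hcc : (c' : ℝ) ≤ (c : ℝ) := by exact_mod_cast hcc'
            nlinarith
        _ = (c : ℝ) * T ^ (-1 + δ) := by rw [hTm]
        _ = ∑ _p ∈ F, T ^ (-1 + δ) := by
            rw [Finset.sum_const, nsmul_eq_mul, hc_def]
        _ ≤ ∑ p ∈ F, (p : ℝ) ^ (-1 + δ) := Finset.sum_le_sum hterm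
  have hbdd : BddBelow {t : ℝ | 2 ≤ t ∧
      x ≤ ∑ᶠ p : ℕ, if p.Prime ∧ (p : ℝ) ≤ t then (p : ℝ) ^ (-1 + δ) else 0} :=
    ⟨2, fun t ht => ht.1⟩
  exact csInf_le hbdd hmem

end
end
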